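/- Suppose the functor M ⊗_R − takes every acyclic complex of projective R-modules to an acyclic complex of S-modules. Then a complex E of projective R-modules is totally acyclic if and only if the complex e¹_λ(E) (applying X ↦ (X, M ⊗_R X)_1 termwise) is a totally acyclic complex of projective Γ-modules. -/

import Mathlib

open TensorProduct CategoryTheory

universe u
variable (R S M : Type) [CommRing R] [CommRing S]
  [AddCommGroup M] [Module R M] [Module S M] [SMulCommClass R S M]

/-- Modules over the triangular matrix ring Γ = [[R,0],[M,S]]: triples (X,Y,φ). -/
structure TriMod where
  X : Type
  Y : Type
  [addX : AddCommGroup X]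
  [modX : Module R X]
  [addY : AddCommGroup Y]
  [modY : Module S Y]
  phi : (M ⊗[R] X) →ₗ[S] Y

attribute [instance] TriMod.addX TriMod.modX TriMod.addY TriMod.modY

variable {R S M}

lemma lT_aux {X X' : Type} [AddCommGroup X] [Module R X] [AddCommGroup X'] [Module R X']
    (f : X →ₗ[R] X') (s : S) (t : M ⊗[R] X) :
    LinearMap.lTensor M f (s • t) = s • LinearMap.lTensor M f t := by
  induction t using TensorProduct.induction_on with
  | zero => simp
  | tmul m x => simp [TensorProduct.smul_tmul']
  | add a b ha hb => simp only [smul_add, map_add, ha, hb]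

/-- `M ⊗ f` as an `S`-linear map. -/
noncomputable def lT {X X' : Type} [AddCommGroup X] [Module R X] [AddCommGroup X'] [Module R X']
    (f : X →ₗ[R] X') : (M ⊗[R] X) →ₗ[S] (M ⊗[R] X') where
  toFun := LinearMap.lTensor M f
  map_add' := map_add _
  map_smul' s t := lT_aux f s t

@[simp] lemma lT_id {X : Type} [AddCommGroup X] [Module R X] :
    (lT (LinearMap.id : X →ₗ[R] X) : (M ⊗[R] X) →ₗ[S] (M ⊗[R] X)) = LinearMap.id := by
  apply LinearMap.ext; intro t
  simp [lT]

lemma lT_comp {X X' X'' : Type} [AddCommGroup X] [Module R X] [AddCommGroup X'] [Module R X']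
    [AddCommGroup X''] [Module R X''] (f : X →ₗ[R] X') (g : X' →ₗ[R] X'') :
    (lT (g ∘ₗ f) : (M ⊗[R] X) →ₗ[S] _) = (lT g) ∘ₗ (lT f) := by
  apply LinearMap.ext; intro t
  simp [lT, LinearMap.lTensor_comp]

@[simp] lemma lT_zero {X X' : Type} [AddCommGroup X] [Module R X] [AddCommGroup X'] [Module R X'] :
    (lT (0 : X →ₗ[R] X') : (M ⊗[R] X) →ₗ[S] (M ⊗[R] X')) = 0 := by
  apply LinearMap.ext; intro t
  simp [lT]

variable (R S M) in
@[ext] structure TriModHom (A B : TriMod R S M) where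
  f : A.X →ₗ[R] B.X
  g : A.Y →ₗ[S] B.Y
  comm : g ∘ₗ A.phi = B.phi ∘ₗ lT f

instance : Category (TriMod R S M) where
  Hom A B := TriModHom R S M A B
  id A := ⟨LinearMap.id, LinearMap.id, by simp⟩
  comp {A B C} u v := ⟨v.f ∘ₗ u.f, v.g ∘ₗ u.g, by
    rw [LinearMap.comp_assoc, u.comm, ← LinearMap.comp_assoc, v.comm, lT_comp,
      LinearMap.comp_assoc]⟩
  id_comp u := by apply TriModHom.ext <;> simp
  comp_id u := by apply TriModHom.ext <;> simp
  assoc u v w := by apply TriModHom.ext <;> simp [LinearMap.comp_assoc]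

instance instZeroHom (A B : TriMod R S M) : Zero (A ⟶ B) := ⟨⟨0, 0, by simp⟩⟩

@[simp] lemma zero_f (A B : TriMod R S M) : (0 : A ⟶ B).f = 0 := rfl
@[simp] lemma zero_g (A B : TriMod R S M) : (0 : A ⟶ B).g = 0 := rfl
@[simp] lemma comp_f {A B C : TriMod R S M} (u : A ⟶ B) (v : B ⟶ C) :
    (u ≫ v).f = v.f ∘ₗ u.f := rfl
@[simp] lemma comp_g {A B C : TriMod R S M} (u : A ⟶ B) (v : B ⟶ C) :
    (u ≫ v).g = v.g ∘ₗ u.g := rfl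
@[simp] lemma id_f (A : TriMod R S M) : TriModHom.f (𝟙 A) = LinearMap.id := rfl
@[simp] lemma id_g (A : TriMod R S M) : TriModHom.g (𝟙 A) = LinearMap.id := rfl

instance : Limits.HasZeroMorphisms (TriMod R S M) where
  comp_zero u C := by apply TriModHom.ext <;> simp
  zero_comp A {B C} u := by apply TriModHom.ext <;> simp
section Generic
open CategoryTheory Limits
variable {C : Type u} [Category.{v} C] [Limits.HasZeroMorphisms C]

/-- A complex of projectives is totally acyclic if it is acyclic and stays acyclic
under `Hom(-, P)` for every projective `P`. -/
def IsTotallyAcyclic (E : ChainComplex C ℤ) : Prop :=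
  (∀ i, Projective (E.X i)) ∧ (∀ i, E.ExactAt i) ∧
  ∀ (P : C), Projective P → ∀ (i : ℤ) (g : E.X i ⟶ P), E.d (i + 1) i ≫ g = 0 →
    ∃ h : E.X (i - 1) ⟶ P, E.d i (i - 1) ≫ h = g

/-- A complex of injectives is totally acyclic if it is acyclic and stays acyclic
under `Hom(I, -)` for every injective `I`. -/
def IsInjTotallyAcyclic (E : ChainComplex C ℤ) : Prop :=
  (∀ i, Injective (E.X i)) ∧ (∀ i, E.ExactAt i) ∧
  ∀ (I : C), Injective I → ∀ (i : ℤ) (g : I ⟶ E.X i), g ≫ E.d i (i - 1) = 0 →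
    ∃ h : I ⟶ E.X (i + 1), h ≫ E.d (i + 1) i = g

/-- An object is Gorenstein projective if it is a syzygy (a kernel of a differential)
of a totally acyclic complex of projectives. -/
def IsGorensteinProjective (G : C) : Prop :=
  ∃ (E : ChainComplex C ℤ), IsTotallyAcyclic E ∧
    ∃ (ι : G ⟶ E.X 0) (w : ι ≫ E.d 0 (-1) = 0),
      Nonempty (IsLimit (KernelFork.ofι ι w))

/-- An object is Gorenstein injective if it is a cosyzygy (a cokernel of a differential)
of a totally acyclic complex of injectives. -/
def IsGorensteinInjective (G : C) : Prop :=
  ∃ (E : ChainComplex C ℤ), IsInjTotallyAcyclic E ∧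
    ∃ (π : E.X 0 ⟶ G) (w : E.d 1 0 ≫ π = 0),
      Nonempty (IsColimit (CokernelCofork.ofπ π w))

end Generic

/-- `Ext¹_A(P, N) = 0`, phrased as: every extension of `P` by `N` splits. -/
def Ext1Vanishes (A : Type) [Ring A] (P N : Type) [AddCommGroup P] [Module A P]
    [AddCommGroup N] [Module A N] : Prop :=
  ∀ (D : Type) [AddCommGroup D] [Module A D] (i : N →ₗ[A] D) (p : D →ₗ[A] P),
    Function.Injective i → Function.Surjective p → Function.Exact i p →
    ∃ s : P →ₗ[A] D, p ∘ₗ s = LinearMap.id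

/-- A module is Gorenstein projective. -/
def ModGorensteinProjective (A : Type) [Ring A] (N : Type) [AddCommGroup N] [Module A N] :
    Prop := IsGorensteinProjective (ModuleCat.of A N)

/-- A module is Gorenstein injective. -/
def ModGorensteinInjective (A : Type) [Ring A] (N : Type) [AddCommGroup N] [Module A N] :
    Prop := IsGorensteinInjective (ModuleCat.of A N)
section Constructions
open CategoryTheory Limits
variable {R S M : Type} [CommRing R] [CommRing S]
  [AddCommGroup M] [Module R M] [Module S M] [SMulCommClass R S M]

variable (R S M) in
/-- The Γ-module `e¹_λ(X) = (X, M ⊗ X)_1`. -/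
noncomputable def e1obj (X : Type) [AddCommGroup X] [Module R X] : TriMod R S M :=
  ⟨X, M ⊗[R] X, LinearMap.id⟩

variable (R S M) in
/-- The Γ-module `e²_λ(Y) = (0, Y)_0`. -/
noncomputable def e2obj (Y : Type) [AddCommGroup Y] [Module S Y] : TriMod R S M :=
  ⟨PUnit, Y, 0⟩

variable (S M) in
/-- The complex `M ⊗[R] E` of `S`-modules obtained from a complex `E` of `R`-modules. -/
noncomputable def tensorComplex (E : ChainComplex (ModuleCat R) ℤ) :
    ChainComplex (ModuleCat S) ℤ where
  X i := ModuleCat.of S (M ⊗[R] E.X i)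
  d i j := ModuleCat.ofHom (lT (E.d i j).hom)
  shape i j h := by
    have h0 : E.d i j = 0 := E.shape i j h
    apply ModuleCat.hom_ext
    rw [h0]
    exact lT_zero
  d_comp_d' i j k _ _ := by
    have h0 : ((E.d j k).hom ∘ₗ (E.d i j).hom) = 0 :=
      congrArg ModuleCat.Hom.hom (E.d_comp_d i j k)
    apply ModuleCat.hom_ext
    show lT (M := M) (S := S) (E.d j k).hom ∘ₗ lT (E.d i j).hom = 0
    rw [← lT_comp, h0, lT_zero]

variable (R S M) in
/-- Condition (1): `M ⊗[R] -` takes acyclic complexes of projective `R`-modules to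
acyclic complexes of `S`-modules. -/
def Cond1 : Prop :=
  ∀ (E : ChainComplex (ModuleCat R) ℤ),
    (∀ i, Module.Projective R (E.X i)) → (∀ i, E.ExactAt i) →
    ∀ i, (tensorComplex S M E).ExactAt i

variable (S M) in
/-- `N` lies in `Add(M)`: it is a direct summand of a direct sum of copies of `M`. -/
def MemAdd (N : Type) [AddCommGroup N] [Module S N] : Prop :=
  ∃ (I : Type) (ι : N →ₗ[S] (I →₀ M)) (p : (I →₀ M) →ₗ[S] N), p ∘ₗ ι = LinearMap.id

variable (R S M) in
/-- Condition (2): `Add(M) ⊆ GProj(S)ᗮ`. -/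
def Cond2 : Prop :=
  ∀ (N : Type) [AddCommGroup N] [Module S N], MemAdd S M N →
    ∀ (G : Type) [AddCommGroup G] [Module S G],
      ModGorensteinProjective S G → Ext1Vanishes S G N

end Constructions
section MoreConstructions
open CategoryTheory Limits
variable {R S M : Type} [CommRing R] [CommRing S]
  [AddCommGroup M] [Module R M] [Module S M] [SMulCommClass R S M]

variable (R S M) in
/-- Termwise application of `e¹_λ` to a complex of `R`-modules. -/
noncomputable def e1c (E : ChainComplex (ModuleCat R) ℤ) : ChainComplex (TriMod R S M) ℤ where
  X i := e1obj R S M (E.X i)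
  d i j := ⟨(E.d i j).hom, lT (E.d i j).hom, by
    show lT (E.d i j).hom ∘ₗ LinearMap.id = LinearMap.id ∘ₗ _
    rfl⟩
  shape i j h := by
    have h0 : (E.d i j).hom = 0 := congrArg ModuleCat.Hom.hom (E.shape i j h)
    apply TriModHom.ext <;> simp [h0] <;> rfl
  d_comp_d' i j k _ _ := by
    have h0 : ((E.d j k).hom ∘ₗ (E.d i j).hom) = 0 :=
      congrArg ModuleCat.Hom.hom (E.d_comp_d i j k)
    apply TriModHom.ext <;> dsimp only [comp_f, comp_g]
    · exact h0
    · show lT (E.d j k).hom ∘ₗ lT (E.d i j).hom = _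
      rw [← lT_comp, h0, lT_zero]; rfl

variable (R S M) in
/-- Termwise application of `e²_λ` to a complex of `S`-modules. -/
noncomputable def e2c (E : ChainComplex (ModuleCat S) ℤ) : ChainComplex (TriMod R S M) ℤ where
  X i := e2obj R S M (E.X i)
  d i j := ⟨0, (E.d i j).hom, by
    show (E.d i j).hom ∘ₗ (0 : (M ⊗[R] PUnit) →ₗ[S] _) = _
    simp <;> rfl⟩
  shape i j h := by
    have h0 : (E.d i j).hom = 0 := congrArg ModuleCat.Hom.hom (E.shape i j h)
    apply TriModHom.ext <;> simp [h0] <;> rfl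
  d_comp_d' i j k _ _ := by
    have h0 : ((E.d j k).hom ∘ₗ (E.d i j).hom) = 0 :=
      congrArg ModuleCat.Hom.hom (E.d_comp_d i j k)
    apply TriModHom.ext <;> dsimp only [comp_f, comp_g]
    · simp
    · exact h0

variable (R S M) in
/-- The complex of first components of a complex of Γ-modules. -/
noncomputable def compA (E : ChainComplex (TriMod R S M) ℤ) : ChainComplex (ModuleCat R) ℤ where
  X i := ModuleCat.of R (E.X i).X
  d i j := ModuleCat.ofHom (E.d i j).f
  shape i j h := by rw [E.shape i j h]; rfl
  d_comp_d' i j k _ _ := by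
    have h0 := congrArg TriModHom.f (E.d_comp_d i j k)
    simp only [comp_f, zero_f] at h0
    apply ModuleCat.hom_ext
    exact h0

lemma range_le_comap {A B : TriMod R S M} (u : A ⟶ B) :
    LinearMap.range A.phi ≤ (LinearMap.range B.phi).comap u.g := by
  rintro y ⟨t, rfl⟩
  exact ⟨lT u.f t, (LinearMap.congr_fun u.comm t).symm⟩

variable (R S M) in
/-- The complex `Coker E` of the cokernels of the structure maps of a complex of
Γ-modules. -/
noncomputable def cokerC (E : ChainComplex (TriMod R S M) ℤ) : ChainComplex (ModuleCat S) ℤ where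
  X i := ModuleCat.of S ((E.X i).Y ⧸ LinearMap.range (E.X i).phi)
  d i j := ModuleCat.ofHom (Submodule.mapQ _ _ (E.d i j).g (range_le_comap (E.d i j)))
  shape i j h := by
    apply ModuleCat.hom_ext; apply LinearMap.ext; intro x
    obtain ⟨y, rfl⟩ := Submodule.Quotient.mk_surjective _ x
    show Submodule.mapQ _ _ (E.d i j).g (range_le_comap (E.d i j)) (Submodule.Quotient.mk y) = 0
    rw [Submodule.mapQ_apply, E.shape i j h]
    rfl
  d_comp_d' i j k _ _ := by
    apply ModuleCat.hom_ext; apply LinearMap.ext; intro x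
    obtain ⟨y, rfl⟩ := Submodule.Quotient.mk_surjective _ x
    have h0 := congrArg TriModHom.g (E.d_comp_d i j k)
    simp only [comp_g, zero_g] at h0
    show Submodule.Quotient.mk ((E.d j k).g ((E.d i j).g y)) = 0
    rw [← LinearMap.comp_apply, h0]
    rfl

end MoreConstructions
section HomModule
open CategoryTheory Limits
variable {R S M : Type} [CommRing R] [CommRing S]
  [AddCommGroup M] [Module R M] [Module S M] [SMulCommClass R S M]

variable (S M) in
/-- Scalar multiplication by `r : R` on `M`, as an `S`-linear map. -/
def rsmulM (r : R) : M →ₗ[S] M where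
  toFun m := r • m
  map_add' := smul_add r
  map_smul' s m := (smul_comm r s m)

/-- The right `R`-module structure on `Hom_S(M, Y)` coming from the `R`-action on `M`. -/
instance homRModule (Y : Type) [AddCommGroup Y] [Module S Y] : Module R (M →ₗ[S] Y) where
  smul r f := f ∘ₗ rsmulM S M r
  one_smul f := by
    apply LinearMap.ext; intro m
    show f ((1 : R) • m) = f m
    rw [one_smul]
  mul_smul r r' f := by
    apply LinearMap.ext; intro m
    show f ((r * r') • m) = f (r' • r • m)
    rw [mul_comm, mul_smul]
  smul_zero r := by apply LinearMap.ext; intro m; rfl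
  smul_add r f g := by apply LinearMap.ext; intro m; rfl
  add_smul r r' f := by
    apply LinearMap.ext; intro m
    show f ((r + r') • m) = f (r • m) + f (r' • m)
    rw [add_smul, map_add]
  zero_smul f := by
    apply LinearMap.ext; intro m
    show f ((0 : R) • m) = 0
    rw [zero_smul, map_zero]

@[simp] lemma homRModule_smul_apply {Y : Type} [AddCommGroup Y] [Module S Y]
    (r : R) (f : M →ₗ[S] Y) (m : M) : (r • f) m = f (r • m) := rfl

/-- Postcomposition `Hom_S(M, g)`, as an `R`-linear map. -/
def hT {Y Y' : Type} [AddCommGroup Y] [Module S Y] [AddCommGroup Y'] [Module S Y']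
    (g : Y →ₗ[S] Y') : (M →ₗ[S] Y) →ₗ[R] (M →ₗ[S] Y') where
  toFun f := g ∘ₗ f
  map_add' f f' := by apply LinearMap.ext; intro m; simp
  map_smul' r f := rfl

@[simp] lemma hT_zero {Y Y' : Type} [AddCommGroup Y] [Module S Y] [AddCommGroup Y']
    [Module S Y'] : hT (R := R) (M := M) (0 : Y →ₗ[S] Y') = 0 := by
  apply LinearMap.ext; intro f; apply LinearMap.ext; intro m; rfl

lemma hT_comp {Y Y' Y'' : Type} [AddCommGroup Y] [Module S Y] [AddCommGroup Y']
    [Module S Y'] [AddCommGroup Y''] [Module S Y''] (g : Y →ₗ[S] Y') (g' : Y' →ₗ[S] Y'') :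
    hT (R := R) (M := M) (g' ∘ₗ g) = (hT g') ∘ₗ (hT g) := by
  apply LinearMap.ext; intro f; apply LinearMap.ext; intro m; rfl

variable (R M) in
/-- The complex `Hom_S(M, E)` of `R`-modules obtained from a complex `E` of `S`-modules. -/
noncomputable def homComplex (E : ChainComplex (ModuleCat S) ℤ) :
    ChainComplex (ModuleCat R) ℤ where
  X i := ModuleCat.of R (M →ₗ[S] E.X i)
  d i j := ModuleCat.ofHom (hT (E.d i j).hom : _ →ₗ[R] _)
  shape i j h := by
    have h0 : (E.d i j).hom = 0 := congrArg ModuleCat.Hom.hom (E.shape i j h)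
    apply ModuleCat.hom_ext
    rw [h0, hT_zero]
    rfl
  d_comp_d' i j k _ _ := by
    have h0 : ((E.d j k).hom ∘ₗ (E.d i j).hom) = 0 :=
      congrArg ModuleCat.Hom.hom (E.d_comp_d i j k)
    apply ModuleCat.hom_ext
    show (hT (R := R) (M := M) (E.d j k).hom) ∘ₗ
      (hT (R := R) (M := M) (E.d i j).hom) = 0
    rw [← hT_comp, h0, hT_zero]

variable (R S M) in
/-- Condition (3): `Hom_S(M, -)` takes acyclic complexes of injective `S`-modules to
acyclic complexes of `R`-modules. -/
def Cond3 : Prop :=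
  ∀ (E : ChainComplex (ModuleCat S) ℤ),
    (∀ i, Module.Injective S (E.X i)) → (∀ i, E.ExactAt i) →
    ∀ i, (homComplex R M E).ExactAt i

variable (R S M) in
/-- Condition (4): `Hom_S(M, I) ∈ ᗮGInj(R)` for every injective `S`-module `I`. -/
def Cond4 : Prop :=
  ∀ (I : Type) [AddCommGroup I] [Module S I], Module.Injective S I →
    ∀ (G : Type) [AddCommGroup G] [Module R G],
      ModGorensteinInjective R G → Ext1Vanishes R (M →ₗ[S] I) G

variable (S M) in
/-- The evaluation map `M ⊗_R Hom_S(M, Y) → Y` as an additive map. -/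
noncomputable def evMapAdd (Y : Type) [AddCommGroup Y] [Module S Y] :
    (M ⊗[R] (M →ₗ[S] Y)) →+ Y :=
  TensorProduct.liftAddHom
    (AddMonoidHom.mk' (fun m => AddMonoidHom.mk' (fun f : M →ₗ[S] Y => f m)
      (fun f g => rfl)) (fun m m' => by
        apply AddMonoidHom.ext; intro f; exact f.map_add m m'))
    (fun r m f => by show f (r • m) = (r • f) m; rfl)

lemma evMapAdd_smul {Y : Type} [AddCommGroup Y] [Module S Y] (s : S)
    (t : M ⊗[R] (M →ₗ[S] Y)) : evMapAdd S M Y (s • t) = s • evMapAdd S M Y t := by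
  induction t using TensorProduct.induction_on with
  | zero => simp
  | tmul m f =>
    rw [TensorProduct.smul_tmul']
    show (f : M →ₗ[S] Y) (s • m) = s • f m
    exact f.map_smul s m
  | add a b ha hb => simp only [map_add, smul_add, ha, hb]

variable (S M) in
/-- The evaluation map `M ⊗_R Hom_S(M, Y) → Y`. -/
noncomputable def evMap (Y : Type) [AddCommGroup Y] [Module S Y] :
    (M ⊗[R] (M →ₗ[S] Y)) →ₗ[S] Y where
  toFun := evMapAdd S M Y
  map_add' := map_add _
  map_smul' := evMapAdd_smul

variable (R S M) in
/-- The Γ-module `e²_ρ(Y) = (Hom_S(M,Y), Y)_1`. -/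
noncomputable def e2rhoObj (Y : Type) [AddCommGroup Y] [Module S Y] : TriMod R S M :=
  ⟨M →ₗ[S] Y, Y, evMap S M Y⟩

end HomModule
section Functors
open CategoryTheory Limits
variable (R S M : Type) [CommRing R] [CommRing S]
  [AddCommGroup M] [Module R M] [Module S M] [SMulCommClass R S M]

/-- The evaluation functor `e¹ : Mod Γ → Mod R`, `(X,Y)_φ ↦ X`. -/
noncomputable def ev1 : TriMod R S M ⥤ ModuleCat R where
  obj A := ModuleCat.of R A.X
  map u := ModuleCat.ofHom u.f
  map_id A := rfl
  map_comp u v := rfl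

/-- The functor `e¹_λ : Mod R → Mod Γ`, `X ↦ (X, M ⊗ X)_1`. -/
noncomputable def e1fun : ModuleCat R ⥤ TriMod R S M where
  obj X := e1obj R S M X
  map {X X'} f := ⟨f.hom, lT f.hom, by
    show lT (M := M) (S := S) f.hom ∘ₗ LinearMap.id = LinearMap.id ∘ₗ _
    rfl⟩
  map_id X := by
    apply TriModHom.ext
    · rfl
    · exact lT_id
  map_comp {X X' X''} f g := by
    apply TriModHom.ext <;> dsimp only [comp_f, comp_g]
    · rfl
    · show lT (M := M) (S := S) (g.hom ∘ₗ f.hom) = _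
      rw [lT_comp]; rfl

/-- The evaluation functor `e² : Mod Γ → Mod S`, `(X,Y)_φ ↦ Y`. -/
noncomputable def ev2 : TriMod R S M ⥤ ModuleCat S where
  obj A := ModuleCat.of S A.Y
  map u := ModuleCat.ofHom u.g
  map_id A := rfl
  map_comp u v := rfl

/-- The functor `e²_λ : Mod S → Mod Γ`, `Y ↦ (0, Y)_0`. -/
noncomputable def e2fun : ModuleCat S ⥤ TriMod R S M where
  obj Y := e2obj R S M Y
  map {Y Y'} g := ⟨LinearMap.id, g.hom, by
    show g.hom ∘ₗ (0 : (M ⊗[R] PUnit) →ₗ[S] Y) = _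
    simp [e2obj] <;> rfl⟩
  map_id Y := by apply TriModHom.ext <;> rfl
  map_comp f g := by
    apply TriModHom.ext
    · show LinearMap.id ∘ₗ LinearMap.id = (LinearMap.id : PUnit →ₗ[R] PUnit)
      simp
    · rfl

/-- The functor `e²_ρ : Mod S → Mod Γ`, `Y ↦ (Hom_S(M,Y), Y)_1`. -/
noncomputable def e2rhoFun : ModuleCat S ⥤ TriMod R S M where
  obj Y := e2rhoObj R S M Y
  map {Y Y'} g := ⟨hT g.hom, g.hom, by
    apply LinearMap.ext; intro t
    induction t using TensorProduct.induction_on with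
    | zero => simp
    | tmul m f => rfl
    | add a b ha hb => simp only [map_add, ha, hb]⟩
  map_id Y := by
    apply TriModHom.ext <;> dsimp only [id_f, id_g]
    · apply LinearMap.ext; intro f; apply LinearMap.ext; intro m; rfl
    · rfl
  map_comp f g := by
    apply TriModHom.ext <;> dsimp only [comp_f, comp_g]
    · apply LinearMap.ext; intro u; apply LinearMap.ext; intro m; rfl
    · rfl

end Functors

section Props
open CategoryTheory Limits
variable {R S M : Type} [CommRing R] [CommRing S]
  [AddCommGroup M] [Module R M] [Module S M] [SMulCommClass R S M]

/-- `Ext¹_Γ(P, A) = 0`: every extension `0 → A → D → P → 0` of Γ-modules splits. -/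
def TriExt1Vanishes (P A : TriMod R S M) : Prop :=
  ∀ (D : TriMod R S M) (i : A ⟶ D) (p : D ⟶ P) (w : i ≫ p = 0), Epi p →
    Nonempty (IsLimit (KernelFork.ofι i w)) → ∃ s : P ⟶ D, s ≫ p = 𝟙 P

/-- `A ∈ GProj(Γ)ᗮ`. -/
def TriMemGProjPerp (A : TriMod R S M) : Prop :=
  ∀ G : TriMod R S M, IsGorensteinProjective G → TriExt1Vanishes G A

/-- `A ∈ ᗮGInj(Γ)`. -/
def TriMemPerpGInj (A : TriMod R S M) : Prop :=
  ∀ G : TriMod R S M, IsGorensteinInjective G → TriExt1Vanishes A G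

variable (R S M) in
/-- `Γ` is virtually Gorenstein: `GProj(Γ)ᗮ = ᗮGInj(Γ)`. -/
def TriVirtuallyGorenstein : Prop :=
  ∀ A : TriMod R S M, TriMemGProjPerp A ↔ TriMemPerpGInj A

/-- A ring `A` is virtually Gorenstein: `GProj(A)ᗮ = ᗮGInj(A)`. -/
def RingVirtuallyGorenstein (A : Type) [Ring A] : Prop :=
  ∀ (N : Type) [AddCommGroup N] [Module A N],
    (∀ (G : Type) [AddCommGroup G] [Module A G],
        ModGorensteinProjective A G → Ext1Vanishes A G N) ↔
    (∀ (G : Type) [AddCommGroup G] [Module A G],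
        ModGorensteinInjective A G → Ext1Vanishes A N G)

/-- An object of a category with zero morphisms is indecomposable: it is nonzero and its
only idempotent endomorphisms are `0` and the identity. -/
def Indec {C : Type u} [Category.{v} C] [Limits.HasZeroMorphisms C] (A : C) : Prop :=
  ¬ IsZero A ∧ ∀ e : A ⟶ A, e ≫ e = e → e = 0 ∨ e = 𝟙 A

/-- A Γ-module is finitely generated iff both components are. -/
def TriFG (A : TriMod R S M) : Prop := Module.Finite R A.X ∧ Module.Finite S A.Y

variable (R S M) in
/-- `Γ` is of finite Cohen-Macaulay type. -/
def TriCMFinite : Prop :=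
  ∃ (n : ℕ) (rep : Fin n → TriMod R S M),
    ∀ A : TriMod R S M, TriFG A → Indec A → IsGorensteinProjective A →
      ∃ i : Fin n, Nonempty (A ≅ rep i)

variable (R S M) in
/-- `Γ` is Cohen-Macaulay free. -/
def TriCMFree : Prop :=
  ∀ A : TriMod R S M, TriFG A → IsGorensteinProjective A → Projective A

/-- A ring is of finite Cohen-Macaulay type: up to isomorphism, only finitely many
indecomposable finitely generated Gorenstein projective modules. -/
def RingCMFinite (A : Type) [Ring A] : Prop :=
  ∃ (n : ℕ) (rep : Fin n → ModuleCat.{0} A),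
    ∀ N : ModuleCat.{0} A, Module.Finite A N → Indec N → IsGorensteinProjective N →
      ∃ i : Fin n, Nonempty (N ≅ rep i)

/-- A ring is Cohen-Macaulay free: every finitely generated Gorenstein projective module
is projective. -/
def RingCMFree (A : Type) [Ring A] : Prop :=
  ∀ (N : Type) [AddCommGroup N] [Module A N],
    Module.Finite A N → ModGorensteinProjective A N → Module.Projective A N

end Props

section TriExactness
open CategoryTheory Limits
variable {R S M : Type} [CommRing R] [CommRing S]
  [AddCommGroup M] [Module R M] [Module S M] [SMulCommClass R S M]

/-! ### The zero object of `TriMod` -/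

abbrev triZero : TriMod R S M := ⟨PUnit, PUnit, 0⟩

lemma hom_to_triZero {A : TriMod R S M} (m : A ⟶ (triZero : TriMod R S M)) : m = 0 := by
  apply TriModHom.ext <;> exact LinearMap.ext fun x => Subsingleton.elim _ _

lemma hom_from_triZero {A : TriMod R S M} (m : (triZero : TriMod R S M) ⟶ A) : m = 0 := by
  apply TriModHom.ext <;>
  · apply LinearMap.ext
    intro x
    rw [Subsingleton.elim x 0]
    simp

lemma isZero_triZero : IsZero (triZero : TriMod R S M) :=
  ⟨fun Y => ⟨⟨⟨0⟩, fun m => hom_from_triZero m⟩⟩,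
   fun Y => ⟨⟨⟨0⟩, fun m => hom_to_triZero m⟩⟩⟩

/-! ### `lT` helper lemmas -/

lemma lT_apply_eq {X X' : Type} [AddCommGroup X] [Module R X] [AddCommGroup X'] [Module R X']
    (f : X →ₗ[R] X') (t : M ⊗[R] X) :
    lT (M := M) (S := S) f t = LinearMap.lTensor M f t := rfl

lemma lT_comp_apply {X X' X'' : Type} [AddCommGroup X] [Module R X] [AddCommGroup X']
    [Module R X'] [AddCommGroup X''] [Module R X'']
    (f : X →ₗ[R] X') (g : X' →ₗ[R] X'') (t : M ⊗[R] X) :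
    lT (M := M) (S := S) g (lT (M := M) (S := S) f t) = lT (M := M) (S := S) (g ∘ₗ f) t :=
  (LinearMap.congr_fun (lT_comp f g) t).symm

/-! ### Kernels in `TriMod` -/

lemma comp_ker_subtype_eq_zero {B C : TriMod R S M} (v : B ⟶ C) :
    v.f ∘ₗ (LinearMap.ker v.f).subtype = 0 :=
  LinearMap.ext fun x => LinearMap.mem_ker.mp x.2

lemma lT_vf_subtype {B C : TriMod R S M} (v : B ⟶ C) (t : M ⊗[R] (LinearMap.ker v.f)) :
    lT (M := M) (S := S) v.f (lT (M := M) (S := S) ((LinearMap.ker v.f).subtype) t) = 0 := by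
  rw [lT_comp_apply, comp_ker_subtype_eq_zero, lT_zero, LinearMap.zero_apply]

noncomputable def kerObj {B C : TriMod R S M} (v : B ⟶ C) : TriMod R S M :=
  ⟨LinearMap.ker v.f, LinearMap.ker v.g,
    LinearMap.codRestrict (LinearMap.ker v.g) (B.phi ∘ₗ lT (LinearMap.ker v.f).subtype)
      (fun t => by
        rw [LinearMap.mem_ker, LinearMap.comp_apply]
        have h1 : v.g (B.phi (lT (LinearMap.ker v.f).subtype t)) =
            C.phi (lT (M := M) (S := S) v.f (lT (M := M) (S := S) (LinearMap.ker v.f).subtype t)) :=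
          LinearMap.congr_fun v.comm _
        rw [h1, lT_vf_subtype, map_zero])⟩

noncomputable def kerι {B C : TriMod R S M} (v : B ⟶ C) : kerObj v ⟶ B :=
  ⟨(LinearMap.ker v.f).subtype, (LinearMap.ker v.g).subtype, by
    apply LinearMap.ext; intro t; rfl⟩

lemma kerι_comp {B C : TriMod R S M} (v : B ⟶ C) : kerι v ≫ v = 0 := by
  apply TriModHom.ext <;>
  · apply LinearMap.ext
    rintro ⟨x, hx⟩
    exact LinearMap.mem_ker.mp hx

noncomputable def kerLift {B C W : TriMod R S M} (v : B ⟶ C) (k : W ⟶ B) (hk : k ≫ v = 0) :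
    W ⟶ kerObj v := by
  have hf : ∀ x, k.f x ∈ LinearMap.ker v.f := fun x => by
    have h := congrArg TriModHom.f hk
    simp only [comp_f, zero_f] at h
    exact LinearMap.mem_ker.mpr (LinearMap.congr_fun h x)
  have hg : ∀ y, k.g y ∈ LinearMap.ker v.g := fun y => by
    have h := congrArg TriModHom.g hk
    simp only [comp_g, zero_g] at h
    exact LinearMap.mem_ker.mpr (LinearMap.congr_fun h y)
  exact ⟨LinearMap.codRestrict _ k.f hf, LinearMap.codRestrict _ k.g hg, by
    apply LinearMap.ext; intro t
    apply Subtype.ext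
    have h1 : k.g (W.phi t) = B.phi (lT k.f t) := LinearMap.congr_fun k.comm t
    show k.g (W.phi t) = B.phi (lT (LinearMap.ker v.f).subtype
      (lT (LinearMap.codRestrict (LinearMap.ker v.f) k.f hf) t))
    rw [h1, lT_comp_apply, LinearMap.subtype_comp_codRestrict]⟩

lemma kerLift_comp {B C W : TriMod R S M} (v : B ⟶ C) (k : W ⟶ B) (hk : k ≫ v = 0) :
    kerLift v k hk ≫ kerι v = k := by
  apply TriModHom.ext <;> (apply LinearMap.ext; intro x; rfl)

noncomputable def kerIsLimit {B C : TriMod R S M} (v : B ⟶ C) :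
    IsLimit (KernelFork.ofι (kerι v) (kerι_comp v)) :=
  KernelFork.IsLimit.ofι _ _ (fun {W} k hk => kerLift v k hk)
    (fun {W} k hk => kerLift_comp v k hk)
    (fun {W} k hk m hm => by
      apply TriModHom.ext
      · apply LinearMap.ext; intro x
        apply Subtype.ext
        have h := congrArg TriModHom.f hm
        simp only [comp_f] at h
        exact LinearMap.congr_fun h x
      · apply LinearMap.ext; intro x
        apply Subtype.ext
        have h := congrArg TriModHom.g hm
        simp only [comp_g] at h
        exact LinearMap.congr_fun h x)

/-! ### Cokernels in `TriMod` -/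

lemma cokerPhi_aux {A B : TriMod R S M} (u : A ⟶ B) :
    Function.Exact (LinearMap.lTensor M u.f)
      (LinearMap.lTensor M (LinearMap.range u.f).mkQ) :=
  lTensor_exact M (LinearMap.exact_map_mkQ_range u.f) (Submodule.mkQ_surjective _)

lemma cokerPhi_surj {A B : TriMod R S M} (u : A ⟶ B) :
    Function.Surjective (lT (M := M) (S := S) (LinearMap.range u.f).mkQ) := by
  intro t
  obtain ⟨a, ha⟩ :=
    LinearMap.lTensor_surjective M (Submodule.mkQ_surjective (LinearMap.range u.f)) t
  exact ⟨a, ha⟩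

lemma cokerPhi_ker_le {A B : TriMod R S M} (u : A ⟶ B) :
    LinearMap.ker (lT (M := M) (S := S) (LinearMap.range u.f).mkQ) ≤
      LinearMap.ker ((LinearMap.range u.g).mkQ ∘ₗ B.phi) := by
  intro t ht
  rw [LinearMap.mem_ker] at ht ⊢
  obtain ⟨s, rfl⟩ := (cokerPhi_aux u t).mp ht
  rw [LinearMap.comp_apply]
  have h1 : B.phi (LinearMap.lTensor M u.f s) = u.g (A.phi s) :=
    (LinearMap.congr_fun u.comm s).symm
  rw [h1]
  exact (Submodule.Quotient.mk_eq_zero _).mpr ⟨A.phi s, rfl⟩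

noncomputable def cokerObj {A B : TriMod R S M} (u : A ⟶ B) : TriMod R S M :=
  ⟨B.X ⧸ LinearMap.range u.f, B.Y ⧸ LinearMap.range u.g,
    (Submodule.liftQ _ ((LinearMap.range u.g).mkQ ∘ₗ B.phi) (cokerPhi_ker_le u)) ∘ₗ
      (LinearMap.quotKerEquivOfSurjective (lT (M := M) (S := S) (LinearMap.range u.f).mkQ)
        (cokerPhi_surj u)).symm.toLinearMap⟩

lemma cokerObj_phi_apply {A B : TriMod R S M} (u : A ⟶ B) (t : M ⊗[R] B.X) :
    (cokerObj u).phi (lT (M := M) (S := S) (LinearMap.range u.f).mkQ t) =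
      (LinearMap.range u.g).mkQ (B.phi t) := by
  have h2 : (LinearMap.quotKerEquivOfSurjective (lT (M := M) (S := S) (LinearMap.range u.f).mkQ)
      (cokerPhi_surj u)).symm (lT (M := M) (S := S) (LinearMap.range u.f).mkQ t) =
      Submodule.Quotient.mk t := by
    apply (LinearMap.quotKerEquivOfSurjective _ (cokerPhi_surj u)).injective
    rw [LinearEquiv.apply_symm_apply]
    rfl
  show (Submodule.liftQ _ ((LinearMap.range u.g).mkQ ∘ₗ B.phi) (cokerPhi_ker_le u))
      ((LinearMap.quotKerEquivOfSurjective _ (cokerPhi_surj u)).symm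
        (lT (M := M) (S := S) (LinearMap.range u.f).mkQ t)) = _
  rw [h2, Submodule.liftQ_apply]
  rfl

noncomputable def cokerπ {A B : TriMod R S M} (u : A ⟶ B) : B ⟶ cokerObj u :=
  ⟨(LinearMap.range u.f).mkQ, (LinearMap.range u.g).mkQ,
    LinearMap.ext fun t => (cokerObj_phi_apply u t).symm⟩

lemma comp_cokerπ {A B : TriMod R S M} (u : A ⟶ B) : u ≫ cokerπ u = 0 := by
  apply TriModHom.ext <;>
  · apply LinearMap.ext
    intro x
    exact (Submodule.Quotient.mk_eq_zero _).mpr ⟨x, rfl⟩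

lemma cokerDesc_memf {A B W : TriMod R S M} (u : A ⟶ B) (k : B ⟶ W) (hk : u ≫ k = 0) :
    LinearMap.range u.f ≤ LinearMap.ker k.f := by
  rintro x ⟨a, rfl⟩
  have h := congrArg TriModHom.f hk
  simp only [comp_f, zero_f] at h
  exact LinearMap.mem_ker.mpr (LinearMap.congr_fun h a)

lemma cokerDesc_memg {A B W : TriMod R S M} (u : A ⟶ B) (k : B ⟶ W) (hk : u ≫ k = 0) :
    LinearMap.range u.g ≤ LinearMap.ker k.g := by
  rintro y ⟨a, rfl⟩
  have h := congrArg TriModHom.g hk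
  simp only [comp_g, zero_g] at h
  exact LinearMap.mem_ker.mpr (LinearMap.congr_fun h a)

noncomputable def cokerDesc {A B W : TriMod R S M} (u : A ⟶ B) (k : B ⟶ W) (hk : u ≫ k = 0) :
    cokerObj u ⟶ W :=
  ⟨Submodule.liftQ _ k.f (cokerDesc_memf u k hk),
   Submodule.liftQ _ k.g (cokerDesc_memg u k hk), by
    apply LinearMap.ext; intro t
    obtain ⟨s, rfl⟩ := cokerPhi_surj u t
    have h2 : (Submodule.liftQ _ k.g (cokerDesc_memg u k hk))
        ((LinearMap.range u.g).mkQ (B.phi s)) = k.g (B.phi s) :=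
      LinearMap.congr_fun (Submodule.liftQ_mkQ _ k.g (cokerDesc_memg u k hk)) (B.phi s)
    have h3 : lT (M := M) (S := S) (Submodule.liftQ _ k.f (cokerDesc_memf u k hk))
        (lT (M := M) (S := S) (LinearMap.range u.f).mkQ s) = lT (M := M) (S := S) k.f s := by
      rw [lT_comp_apply, Submodule.liftQ_mkQ]
    exact (congrArg (Submodule.liftQ _ k.g (cokerDesc_memg u k hk)) (cokerObj_phi_apply u s)).trans
      (h2.trans ((LinearMap.congr_fun k.comm s).trans (congrArg W.phi h3.symm)))⟩

lemma cokerπ_desc {A B W : TriMod R S M} (u : A ⟶ B) (k : B ⟶ W) (hk : u ≫ k = 0) :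
    cokerπ u ≫ cokerDesc u k hk = k := by
  apply TriModHom.ext
  · show Submodule.liftQ _ k.f (cokerDesc_memf u k hk) ∘ₗ (LinearMap.range u.f).mkQ = k.f
    exact Submodule.liftQ_mkQ _ k.f _
  · show Submodule.liftQ _ k.g (cokerDesc_memg u k hk) ∘ₗ (LinearMap.range u.g).mkQ = k.g
    exact Submodule.liftQ_mkQ _ k.g _

noncomputable def cokerIsColimit {A B : TriMod R S M} (u : A ⟶ B) :
    IsColimit (CokernelCofork.ofπ (cokerπ u) (comp_cokerπ u)) :=
  CokernelCofork.IsColimit.ofπ _ _ (fun {W} k hk => cokerDesc u k hk)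
    (fun {W} k hk => cokerπ_desc u k hk)
    (fun {W} k hk m hm => by
      apply TriModHom.ext
      · apply LinearMap.ext; intro x
        obtain ⟨y, rfl⟩ := Submodule.mkQ_surjective _ x
        have h1 := congrArg TriModHom.f hm
        simp only [comp_f] at h1
        have h2 := congrArg TriModHom.f (cokerπ_desc u k hk)
        simp only [comp_f] at h2
        exact (LinearMap.congr_fun h1 y).trans (LinearMap.congr_fun h2 y).symm
      · apply LinearMap.ext; intro x
        obtain ⟨y, rfl⟩ := Submodule.mkQ_surjective _ x
        have h1 := congrArg TriModHom.g hm
        simp only [comp_g] at h1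
        have h2 := congrArg TriModHom.g (cokerπ_desc u k hk)
        simp only [comp_g] at h2
        exact (LinearMap.congr_fun h1 y).trans (LinearMap.congr_fun h2 y).symm)

end TriExactness
section TriExactness2
open CategoryTheory Limits
variable {R S M : Type} [CommRing R] [CommRing S]
  [AddCommGroup M] [Module R M] [Module S M] [SMulCommClass R S M]

/-! ### Homology data for exact short complexes in `TriMod` -/

noncomputable def exactLeftData (T : ShortComplex (TriMod R S M))
    (hX : ∀ x, T.g.f x = 0 → x ∈ LinearMap.range T.f.f)
    (hY : ∀ y, T.g.g y = 0 → y ∈ LinearMap.range T.f.g) :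
    T.LeftHomologyData where
  K := kerObj T.g
  H := triZero
  i := kerι T.g
  π := 0
  wi := kerι_comp T.g
  hi := kerIsLimit T.g
  wπ := comp_zero
  hπ := by
    have hfi : (kerIsLimit T.g).lift (KernelFork.ofι T.f T.zero) ≫ kerι T.g = T.f := by
      have h := Fork.IsLimit.lift_ι (s := KernelFork.ofι (kerι T.g) (kerι_comp T.g))
        (t := KernelFork.ofι T.f T.zero) (kerIsLimit T.g)
      simpa using h
    have hsf : Function.Surjective ((kerIsLimit T.g).lift (KernelFork.ofι T.f T.zero)).f := by
      intro y
      obtain ⟨a, ha⟩ := hX y.1 (LinearMap.mem_ker.mp y.2)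
      refine ⟨a, Subtype.ext ?_⟩
      have h := congrArg TriModHom.f hfi
      simp only [comp_f] at h
      exact (LinearMap.congr_fun h a).trans ha
    have hsg : Function.Surjective ((kerIsLimit T.g).lift (KernelFork.ofι T.f T.zero)).g := by
      intro y
      obtain ⟨a, ha⟩ := hY y.1 (LinearMap.mem_ker.mp y.2)
      refine ⟨a, Subtype.ext ?_⟩
      have h := congrArg TriModHom.g hfi
      simp only [comp_g] at h
      exact (LinearMap.congr_fun h a).trans ha
    refine CokernelCofork.IsColimit.ofπ _ _ (fun {W} k hk => 0) (fun {W} k hk => ?_)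
      (fun {W} k hk m hm => hom_from_triZero m)
    rw [zero_comp]
    symm
    apply TriModHom.ext
    · apply LinearMap.ext; intro x
      obtain ⟨a, rfl⟩ := hsf x
      have h := congrArg TriModHom.f hk
      simp only [comp_f, zero_f] at h
      exact LinearMap.congr_fun h a
    · apply LinearMap.ext; intro x
      obtain ⟨a, rfl⟩ := hsg x
      have h := congrArg TriModHom.g hk
      simp only [comp_g, zero_g] at h
      exact LinearMap.congr_fun h a

noncomputable def exactRightData (T : ShortComplex (TriMod R S M))
    (hX : ∀ x, T.g.f x = 0 → x ∈ LinearMap.range T.f.f)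
    (hY : ∀ y, T.g.g y = 0 → y ∈ LinearMap.range T.f.g) :
    T.RightHomologyData where
  Q := cokerObj T.f
  H := triZero
  p := cokerπ T.f
  ι := 0
  wp := comp_cokerπ T.f
  hp := cokerIsColimit T.f
  wι := zero_comp
  hι := by
    have hpg : cokerπ T.f ≫ (cokerIsColimit T.f).desc (CokernelCofork.ofπ T.g T.zero) = T.g := by
      have h := Cofork.IsColimit.π_desc (s := CokernelCofork.ofπ (cokerπ T.f) (comp_cokerπ T.f))
        (t := CokernelCofork.ofπ T.g T.zero) (cokerIsColimit T.f)
      simpa using h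
    have hif : ∀ x, ((cokerIsColimit T.f).desc (CokernelCofork.ofπ T.g T.zero)).f x = 0 →
        x = 0 := by
      intro x hx0
      obtain ⟨y, rfl⟩ := Submodule.mkQ_surjective _ x
      have h1 := congrArg TriModHom.f hpg
      simp only [comp_f] at h1
      have hgy : T.g.f y = 0 := (LinearMap.congr_fun h1 y).symm.trans hx0
      exact (Submodule.Quotient.mk_eq_zero _).mpr (hX y hgy)
    have hig : ∀ x, ((cokerIsColimit T.f).desc (CokernelCofork.ofπ T.g T.zero)).g x = 0 →
        x = 0 := by
      intro x hx0
      obtain ⟨y, rfl⟩ := Submodule.mkQ_surjective _ x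
      have h1 := congrArg TriModHom.g hpg
      simp only [comp_g] at h1
      have hgy : T.g.g y = 0 := (LinearMap.congr_fun h1 y).symm.trans hx0
      exact (Submodule.Quotient.mk_eq_zero _).mpr (hY y hgy)
    refine KernelFork.IsLimit.ofι _ _ (fun {W} k hk => 0) (fun {W} k hk => ?_)
      (fun {W} k hk m hm => hom_to_triZero m)
    rw [zero_comp]
    symm
    apply TriModHom.ext
    · apply LinearMap.ext; intro x
      have h := congrArg TriModHom.f hk
      simp only [comp_f, zero_f] at h
      exact hif _ (LinearMap.congr_fun h x)
    · apply LinearMap.ext; intro x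
      have h := congrArg TriModHom.g hk
      simp only [comp_g, zero_g] at h
      exact hig _ (LinearMap.congr_fun h x)

lemma tri_exact_of_exact (T : ShortComplex (TriMod R S M))
    (hX : ∀ x, T.g.f x = 0 → x ∈ LinearMap.range T.f.f)
    (hY : ∀ y, T.g.g y = 0 → y ∈ LinearMap.range T.f.g) : T.Exact := by
  refine ⟨⟨⟨exactLeftData T hX hY, exactRightData T hX hY, Iso.refl _, ?_⟩, isZero_triZero⟩⟩
  show (0 : kerObj T.g ⟶ triZero) ≫ _ = kerι T.g ≫ cokerπ T.f
  refine zero_comp.trans ?_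
  symm
  apply TriModHom.ext
  · apply LinearMap.ext; rintro ⟨x, hx⟩
    exact (Submodule.Quotient.mk_eq_zero _).mpr (hX x (LinearMap.mem_ker.mp hx))
  · apply LinearMap.ext; rintro ⟨y, hy⟩
    exact (Submodule.Quotient.mk_eq_zero _).mpr (hY y (LinearMap.mem_ker.mp hy))

/-! ### Exactness implies concrete exactness of the first components -/

lemma tri_exact_componentX (T : ShortComplex (TriMod R S M)) (hT : T.Exact) :
    ∀ x, T.g.f x = 0 → x ∈ LinearMap.range T.f.f := by
  obtain ⟨hd, hz⟩ := hT.condition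
  intro x hx
  -- Step A: the induced map `f' : T.X₁ ⟶ K` has surjective first component
  have hA : Function.Surjective (hd.left.f').f := by
    set W : TriMod R S M :=
      ⟨hd.left.K.X ⧸ LinearMap.range (hd.left.f').f, PUnit, 0⟩ with hW
    set q : hd.left.K ⟶ W :=
      ⟨(LinearMap.range (hd.left.f').f).mkQ, 0, LinearMap.ext fun t => Subsingleton.elim _ _⟩
      with hq
    have hq0 : hd.left.f' ≫ q = 0 := by
      apply TriModHom.ext
      · apply LinearMap.ext; intro a
        exact (Submodule.Quotient.mk_eq_zero _).mpr ⟨a, rfl⟩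
      · apply LinearMap.ext; intro a
        exact Subsingleton.elim _ _
    have hfac : hd.left.π ≫ hd.left.hπ'.desc (CokernelCofork.ofπ q hq0) = q := by
      have h := Cofork.IsColimit.π_desc
        (s := CokernelCofork.ofπ hd.left.π hd.left.f'_π)
        (t := CokernelCofork.ofπ q hq0) hd.left.hπ'
      simpa using h
    have hqzero : q = 0 := by
      rw [← hfac, hz.eq_of_src (hd.left.hπ'.desc (CokernelCofork.ofπ q hq0)) 0, comp_zero]
    intro y
    have hy0 : (LinearMap.range (hd.left.f').f).mkQ y = 0 := by
      have h := congrArg TriModHom.f hqzero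
      simp only [zero_f] at h
      exact LinearMap.congr_fun h y
    exact (Submodule.Quotient.mk_eq_zero _).mp hy0
  -- Step B: compare with the concrete kernel
  have hxk : x ∈ LinearMap.ker T.g.f := LinearMap.mem_ker.mpr hx
  set e : kerObj T.g ⟶ hd.left.K := hd.left.liftK (kerι T.g) (kerι_comp T.g) with he
  have hei : e ≫ hd.left.i = kerι T.g := hd.left.liftK_i _ _
  obtain ⟨a, ha⟩ := hA (e.f ⟨x, hxk⟩)
  refine ⟨a, ?_⟩
  have h1 := congrArg TriModHom.f hd.left.f'_i
  simp only [comp_f] at h1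
  have h2 := congrArg TriModHom.f hei
  simp only [comp_f] at h2
  calc T.f.f a = hd.left.i.f ((hd.left.f').f a) := (LinearMap.congr_fun h1 a).symm
  _ = hd.left.i.f (e.f ⟨x, hxk⟩) := by rw [ha]
  _ = x := LinearMap.congr_fun h2 ⟨x, hxk⟩

end TriExactness2
section TriProjectivity
open CategoryTheory Limits
variable {R S M : Type} [CommRing R] [CommRing S]
  [AddCommGroup M] [Module R M] [Module S M] [SMulCommClass R S M]

lemma surjective_f_of_epi {A B : TriMod R S M} (p : A ⟶ B) (hp : Epi p) :
    Function.Surjective p.f := by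
  set W : TriMod R S M := ⟨B.X ⧸ LinearMap.range p.f, PUnit, 0⟩ with hW
  set q : B ⟶ W := ⟨(LinearMap.range p.f).mkQ, 0,
    LinearMap.ext fun t => Subsingleton.elim _ _⟩ with hqdef
  have hq : p ≫ q = p ≫ 0 := by
    rw [comp_zero]
    apply TriModHom.ext
    · apply LinearMap.ext; intro a
      exact (Submodule.Quotient.mk_eq_zero _).mpr ⟨a, rfl⟩
    · apply LinearMap.ext; intro a
      exact Subsingleton.elim _ _
  have hq0 : q = 0 := (cancel_epi p).mp hq
  intro b
  have hb : (LinearMap.range p.f).mkQ b = 0 := by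
    have h := congrArg TriModHom.f hq0
    simp only [zero_f] at h
    exact LinearMap.congr_fun h b
  exact (Submodule.Quotient.mk_eq_zero _).mp hb

/-- If `X` is a projective `R`-module then `e¹_λ(X)` is a projective `Γ`-module. -/
lemma projective_e1obj (X : Type) [AddCommGroup X] [Module R X]
    (hX : Module.Projective R X) : Projective (e1obj R S M X) := by
  constructor
  intro E B u e he
  obtain ⟨l, hl⟩ := Module.projective_lifting_property (h := hX) e.f u.f
    (surjective_f_of_epi e he)
  refine ⟨⟨l, E.phi ∘ₗ lT (M := M) (S := S) l, ?_⟩, ?_⟩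
  · show (E.phi ∘ₗ lT (M := M) (S := S) l) ∘ₗ LinearMap.id = E.phi ∘ₗ lT l
    rw [LinearMap.comp_id]
  · apply TriModHom.ext
    · exact hl
    · apply LinearMap.ext; intro t
      have h1 : e.g (E.phi (lT (M := M) (S := S) l t)) =
          B.phi (lT (M := M) (S := S) e.f (lT (M := M) (S := S) l t)) :=
        LinearMap.congr_fun e.comm _
      have h2 : u.g t = B.phi (lT (M := M) (S := S) u.f t) :=
        LinearMap.congr_fun u.comm t
      show e.g (E.phi (lT (M := M) (S := S) l t)) = u.g t
      rw [h1, h2]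
      exact congrArg B.phi ((lT_comp_apply (M := M) (S := S) l e.f (t : M ⊗[R] X)).trans
        (congrArg (fun f => lT (M := M) (S := S) f (t : M ⊗[R] X)) hl))

/-- If `P` is a projective `Γ`-module then `P.X` is a projective `R`-module. -/
lemma projective_X_of_projective (P : TriMod R S M) (hP : Projective P) :
    Module.Projective R P.X := by
  apply Module.Projective.of_lifting_property''
  intro f hf
  set TE : TriMod R S M := ⟨P.X →₀ R, PUnit, 0⟩ with hTE
  set TX : TriMod R S M := ⟨P.X, PUnit, 0⟩ with hTX
  set pt : TE ⟶ TX := ⟨f, 0, LinearMap.ext fun t => Subsingleton.elim _ _⟩ with hpt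
  have hept : Epi pt := by
    constructor
    intro W q q' hqq
    apply TriModHom.ext
    · have h := congrArg TriModHom.f hqq
      simp only [comp_f] at h
      apply LinearMap.ext; intro x
      obtain ⟨y, rfl⟩ := hf x
      exact LinearMap.congr_fun h y
    · apply LinearMap.ext; intro x
      rw [Subsingleton.elim x 0, map_zero, map_zero]
  set ut : P ⟶ TX := ⟨LinearMap.id, 0, LinearMap.ext fun t => Subsingleton.elim _ _⟩ with hut
  obtain ⟨s, hs⟩ := @Projective.factors _ _ _ hP _ _ ut pt hept
  refine ⟨s.f, ?_⟩
  have h := congrArg TriModHom.f hs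
  simp only [comp_f] at h
  exact h

end TriProjectivity
section MainGlue
open CategoryTheory Limits

lemma modcat_projective_iff {R' : Type} [Ring R'] (N : ModuleCat.{0} R') :
    Projective N ↔ Module.Projective R' N := by
  constructor
  · intro h
    exact (IsProjective.iff_projective N).mpr h
  · intro h
    exact (IsProjective.iff_projective N).mp h

variable {R S M : Type} [CommRing R] [CommRing S]
  [AddCommGroup M] [Module R M] [Module S M] [SMulCommClass R S M]

lemma exactAt_e1c_iff (h1 : Cond1 R S M) (E : ChainComplex (ModuleCat R) ℤ)
    (hproj : ∀ i, Module.Projective R (E.X i)) (hex : ∀ i, E.ExactAt i) (i : ℤ) :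
    (e1c R S M E).ExactAt i := by
  rw [HomologicalComplex.exactAt_iff' _ (i + 1) i (i - 1)
    (ChainComplex.prev ℤ i) (ChainComplex.next ℤ i)]
  apply tri_exact_of_exact
  · intro x hx
    have h := hex i
    rw [HomologicalComplex.exactAt_iff' _ (i + 1) i (i - 1)
      (ChainComplex.prev ℤ i) (ChainComplex.next ℤ i),
      ShortComplex.moduleCat_exact_iff] at h
    obtain ⟨y, hy⟩ := h x hx
    exact ⟨y, hy⟩
  · intro y hy
    have h := h1 E hproj hex i
    rw [HomologicalComplex.exactAt_iff' _ (i + 1) i (i - 1)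
      (ChainComplex.prev ℤ i) (ChainComplex.next ℤ i),
      ShortComplex.moduleCat_exact_iff] at h
    obtain ⟨z, hz⟩ := h y hy
    exact ⟨z, hz⟩

end MainGlue
section Statement
open CategoryTheory Limits
variable {R S M : Type} [CommRing R] [CommRing S]
  [AddCommGroup M] [Module R M] [Module S M] [SMulCommClass R S M]

/-- If `M ⊗_R -` preserves acyclicity of acyclic complexes of projective `R`-modules,
then a complex `E` of projective `R`-modules is totally acyclic iff `e¹_λ(E)` is a
totally acyclic complex of projective Γ-modules. -/
theorem totallyAcyclic_iff_e1c (h1 : Cond1 R S M) (E : ChainComplex (ModuleCat R) ℤ)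
    (hproj : ∀ i, Module.Projective R (E.X i)) :
    IsTotallyAcyclic E ↔ IsTotallyAcyclic (e1c R S M E) := by
  have hprojCat : ∀ i, Projective (E.X i) := fun i =>
    (modcat_projective_iff (E.X i)).mpr (hproj i)
  have hprojTri : ∀ i, Projective ((e1c R S M E).X i) := fun i =>
    projective_e1obj (E.X i) (hproj i)
  constructor
  · rintro ⟨-, hex, hlift⟩
    refine ⟨hprojTri, exactAt_e1c_iff h1 E hproj hex, ?_⟩
    intro P hP i g hg
    have hPX : Module.Projective R P.X := projective_X_of_projective P hP
    have hPXcat : Projective (ModuleCat.of R P.X) := (modcat_projective_iff _).mpr hPX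
    have hgf : E.d (i + 1) i ≫ (ModuleCat.ofHom g.f : E.X i ⟶ ModuleCat.of R P.X)
        = 0 := by
      have h := congrArg TriModHom.f hg
      simp only [comp_f, zero_f] at h
      exact ModuleCat.hom_ext h
    obtain ⟨l, hl⟩ := hlift (ModuleCat.of R P.X) hPXcat i (ModuleCat.ofHom g.f) hgf
    refine ⟨⟨l.hom, P.phi ∘ₗ lT (M := M) (S := S) l.hom, ?_⟩, ?_⟩
    · show (P.phi ∘ₗ lT (M := M) (S := S) l.hom) ∘ₗ LinearMap.id = P.phi ∘ₗ lT l.hom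
      rw [LinearMap.comp_id]
    · apply TriModHom.ext
      · exact congrArg ModuleCat.Hom.hom hl
      · apply LinearMap.ext; intro t
        have h2 : g.g t = P.phi (lT (M := M) (S := S) g.f t) :=
          LinearMap.congr_fun g.comm t
        show P.phi (lT (M := M) (S := S) l.hom (lT (M := M) (S := S)
          ((E.d i (i - 1)).hom) (t : M ⊗[R] E.X i))) = g.g t
        have hl' : l.hom ∘ₗ (E.d i (i - 1)).hom
            = g.f := congrArg ModuleCat.Hom.hom hl
        rw [h2]
        exact congrArg P.phi ((lT_comp_apply (M := M) (S := S) (E.d i (i - 1)).hom l.hom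
          (t : M ⊗[R] E.X i)).trans (congrArg (fun f => lT (M := M) (S := S) f (t : M ⊗[R] E.X i)) hl'))
  · rintro ⟨-, hex, hlift⟩
    refine ⟨hprojCat, ?_, ?_⟩
    · intro i
      rw [HomologicalComplex.exactAt_iff' _ (i + 1) i (i - 1)
        (ChainComplex.prev ℤ i) (ChainComplex.next ℤ i),
        ShortComplex.moduleCat_exact_iff]
      have h := hex i
      rw [HomologicalComplex.exactAt_iff' _ (i + 1) i (i - 1)
        (ChainComplex.prev ℤ i) (ChainComplex.next ℤ i)] at h
      intro x hx
      obtain ⟨y, hy⟩ := tri_exact_componentX _ h x hx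
      exact ⟨y, hy⟩
    · intro P hP i g hg
      have hPm : Module.Projective R P := (modcat_projective_iff P).mp hP
      have hTP : Projective (e1obj R S M P) := projective_e1obj (X := P) hPm
      have hgl : g.hom ∘ₗ (E.d (i + 1) i).hom = 0 := congrArg ModuleCat.Hom.hom hg
      set G : (e1c R S M E).X i ⟶ e1obj R S M P :=
        ⟨g.hom, lT (M := M) (S := S) g.hom, by
          show lT (M := M) (S := S) g.hom ∘ₗ LinearMap.id
            = LinearMap.id ∘ₗ lT g.hom
          rw [LinearMap.comp_id, LinearMap.id_comp]⟩ with hG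
      have hGd : (e1c R S M E).d (i + 1) i ≫ G = 0 := by
        apply TriModHom.ext
        · exact hgl
        · show lT (M := M) (S := S) g.hom ∘ₗ
            lT (M := M) (S := S) (E.d (i + 1) i).hom = 0
          rw [← lT_comp, hgl, lT_zero]
      obtain ⟨H, hH⟩ := hlift (e1obj R S M P) hTP i G hGd
      refine ⟨ModuleCat.ofHom H.f, ?_⟩
      have h := congrArg TriModHom.f hH
      simp only [comp_f] at h
      exact ModuleCat.hom_ext h

end Statement
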